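/- Let $E, F$ be Riesz spaces, $T : E \to F$ a disjointness preserving orthogonally additive operator, and let $x, y \in E$ be laterally bounded by a common element $e$ (i.e., $x \sqsubseteq e$ and $y \sqsubseteq e$). Then $(T(x))^+ \wedge (T(y))^- = 0$. -/
import Mathlib


/-- Disjointness in a Riesz space: `|x| ⊓ |y| = 0`. -/
def RDisjoint {E : Type*} [Lattice E] [AddCommGroup E] (x y : E) : Prop :=
  |x| ⊓ |y| = 0

/-- `x` is a fragment of `e` (lateral order `x ⊑ e`): `x ⊥ (e - x)`. -/
def IsFragment {E : Type*} [Lattice E] [AddCommGroup E] (x e : E) : Prop :=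
  RDisjoint x (e - x)

/-- An orthogonally additive operator. -/
def IsOAO {E F : Type*} [Lattice E] [AddCommGroup E] [Lattice F] [AddCommGroup F]
    (T : E → F) : Prop :=
  ∀ x y : E, RDisjoint x y → T (x + y) = T x + T y

section Helpers
variable {G : Type*} [Lattice G] [AddCommGroup G] [CovariantClass G G (· + ·) (· ≤ ·)]

lemma myInfAdd (a b c : G) (ha : 0 ≤ a) (hb : 0 ≤ b) (hc : 0 ≤ c) :
    a ⊓ (b + c) ≤ a ⊓ b + a ⊓ c := by
  have h : a ⊓ b + a ⊓ c = ((a + a) ⊓ (b + a)) ⊓ ((a + c) ⊓ (b + c)) := by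
    rw [inf_add (a := a) (b := b) (c := a ⊓ c), add_inf, add_inf, inf_inf_inf_comm]
  rw [h]
  refine le_inf (le_inf ?_ ?_) (le_inf ?_ ?_)
  · exact inf_le_left.trans (le_add_of_nonneg_right ha)
  · exact inf_le_left.trans (le_add_of_nonneg_left hb)
  · exact inf_le_left.trans (le_add_of_nonneg_right hc)
  · exact inf_le_right

lemma myFour (p q r s : G) (hp : 0 ≤ p) (hq : 0 ≤ q) (hr : 0 ≤ r) (hs : 0 ≤ s)
    (h1 : p ⊓ r = 0) (h2 : p ⊓ s = 0) (h3 : q ⊓ r = 0) (h4 : q ⊓ s = 0) :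
    (p + q) ⊓ (r + s) = 0 := by
  refine le_antisymm ?_ (le_inf (add_nonneg hp hq) (add_nonneg hr hs))
  calc (p + q) ⊓ (r + s) ≤ (p + q) ⊓ r + (p + q) ⊓ s :=
        myInfAdd _ _ _ (add_nonneg hp hq) hr hs
    _ ≤ (p ⊓ r + q ⊓ r) + (p ⊓ s + q ⊓ s) := by
        refine add_le_add ?_ ?_
        · rw [inf_comm]; exact (myInfAdd _ _ _ hr hp hq).trans (by rw [inf_comm r p, inf_comm r q])
        · rw [inf_comm]; exact (myInfAdd _ _ _ hs hp hq).trans (by rw [inf_comm s p, inf_comm s q])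
    _ = 0 := by rw [h1, h2, h3, h4]; simp

lemma myPos (u v : G) (h : u ⊓ v = 0) :
    (u - v)⁺ = u ∧ (u - v)⁻ = v := by
  constructor
  · have hs : v ⊔ u = v + u := by
      have h2 := inf_add_sup v u
      rw [inf_comm, h, zero_add] at h2; exact h2
    rw [posPart_def, show (0 : G) = v - v by simp, ← sup_sub, sup_comm, hs]
    abel
  · have hs : u ⊔ v = u + v := by
      have h2 := inf_add_sup u v
      rw [h, zero_add] at h2; exact h2
    rw [negPart_def, neg_sub, show (0 : G) = u - u by simp, ← sup_sub, sup_comm, hs]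
    abel

lemma myAbs (u v : G) (h : u ⊓ v = 0) : |u - v| = u + v := by
  rw [← posPart_add_negPart (u - v), (myPos u v h).1, (myPos u v h).2]

lemma posPart_le_abs' (a : G) : a⁺ ≤ |a| := by
  rw [posPart_def]; exact sup_le (le_abs_self a) (abs_nonneg a)

lemma negPart_le_abs' (a : G) : a⁻ ≤ |a| := by
  rw [negPart_def]; exact sup_le (neg_le_abs a) (abs_nonneg a)

lemma myDisjSum (a b : G) (h : |a| ⊓ |b| = 0) :
    (a + b)⁺ = a⁺ + b⁺ ∧ (a + b)⁻ = a⁻ + b⁻ := by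
  have key : (a⁺ + b⁺) ⊓ (a⁻ + b⁻) = 0 := by
    refine myFour _ _ _ _ (posPart_nonneg a) (posPart_nonneg b) (negPart_nonneg a)
      (negPart_nonneg b) (posPart_inf_negPart_eq_zero a) ?_ ?_ (posPart_inf_negPart_eq_zero b)
    · refine le_antisymm (le_trans (inf_le_inf (posPart_le_abs' a) (negPart_le_abs' b)) h.le)
        (le_inf (posPart_nonneg a) (negPart_nonneg b))
    · refine le_antisymm ?_ (le_inf (posPart_nonneg b) (negPart_nonneg a))
      calc b⁺ ⊓ a⁻ ≤ |b| ⊓ |a| := inf_le_inf (posPart_le_abs' b) (negPart_le_abs' a)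
        _ = 0 := by rw [inf_comm]; exact h
  have hab : a + b = (a⁺ + b⁺) - (a⁻ + b⁻) := by
    conv_lhs => rw [← posPart_sub_negPart a, ← posPart_sub_negPart b]
    abel
  rw [hab]
  exact myPos _ _ key

lemma myZero (a b : G) (ha : 0 ≤ a) (hb : 0 ≤ b) (h : a ⊓ b ≤ 0) : a ⊓ b = 0 :=
  le_antisymm h (le_inf ha hb)

lemma myFrag (x e : G) (h : |x| ⊓ |e - x| = 0) :
    x⁺ ⊓ (e⁺ - x⁺) = 0 ∧ x⁻ ⊓ (e⁻ - x⁻) = 0 ∧ x⁺ ≤ e⁺ ∧ x⁻ ≤ e⁻ := by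
  have he : x + (e - x) = e := by abel
  obtain ⟨h1, h2⟩ := myDisjSum x (e - x) h
  rw [he] at h1 h2
  refine ⟨?_, ?_, ?_, ?_⟩
  · have h3 : e⁺ - x⁺ = (e - x)⁺ := by rw [h1]; abel
    rw [h3]
    exact myZero _ _ (posPart_nonneg x) (posPart_nonneg _)
      ((inf_le_inf (posPart_le_abs' _) (posPart_le_abs' _)).trans h.le)
  · have h3 : e⁻ - x⁻ = (e - x)⁻ := by rw [h2]; abel
    rw [h3]
    exact myZero _ _ (negPart_nonneg x) (negPart_nonneg _)
      ((inf_le_inf (negPart_le_abs' _) (negPart_le_abs' _)).trans h.le)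
  · rw [h1]; exact le_add_of_nonneg_right (posPart_nonneg _)
  · rw [h2]; exact le_add_of_nonneg_right (negPart_nonneg _)

lemma myComp (a b u : G) (ha : 0 ≤ a) (hb : 0 ≤ b) (hau : a ≤ u) (hbu : b ≤ u)
    (hfrag : b ⊓ (u - b) = 0) : (a ⊓ b) ⊓ (a - a ⊓ b) = 0 := by
  have h1 : a - a ⊓ b ≤ u - b := by
    rw [sub_inf]
    exact sup_le ((sub_self a).le.trans (sub_nonneg.2 hbu)) (sub_le_sub_right hau b)
  refine myZero _ _ (le_inf ha hb) (sub_nonneg.2 inf_le_left) ?_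
  calc (a ⊓ b) ⊓ (a - a ⊓ b) ≤ b ⊓ (u - b) := inf_le_inf inf_le_right h1
    _ = 0 := hfrag

end Helpers

variable {E F : Type*}
  [Lattice E] [AddCommGroup E] [CovariantClass E E (· + ·) (· ≤ ·)]
  [Lattice F] [AddCommGroup F] [CovariantClass F F (· + ·) (· ≤ ·)]

/-- Analogue of Meyer's lemma for OAOs: for laterally bounded `x, y`,
`(T x)⁺ ∧ (T y)⁻ = 0`. -/
theorem meyer_lemma_for_oao (T : E → F)
    (hT : IsOAO T)
    (hd : ∀ x y : E, RDisjoint x y → RDisjoint (T x) (T y))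
    (x y e : E) (hx : IsFragment x e) (hy : IsFragment y e) :
    (T x)⁺ ⊓ (T y)⁻ = 0 := by
  obtain ⟨hx1, hx2, hx3, hx4⟩ := myFrag x e hx
  obtain ⟨hy1, hy2, hy3, hy4⟩ := myFrag y e hy
  have hee : e⁺ ⊓ e⁻ = 0 := posPart_inf_negPart_eq_zero e
  have cross : ∀ u v : E, 0 ≤ u → 0 ≤ v → u ≤ e⁺ → v ≤ e⁻ → u ⊓ v = 0 := fun u v hu hv h1 h2 =>
    myZero u v hu hv (le_of_le_of_eq (inf_le_inf h1 h2) hee)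
  set m := x⁺ ⊓ y⁺ with hm
  set n := x⁻ ⊓ y⁻ with hn
  have hm0 : 0 ≤ m := le_inf (posPart_nonneg x) (posPart_nonneg y)
  have hn0 : 0 ≤ n := le_inf (negPart_nonneg x) (negPart_nonneg y)
  have hme : m ≤ e⁺ := inf_le_left.trans hx3
  have hne : n ≤ e⁻ := inf_le_left.trans hx4
  have hmn : m ⊓ n = 0 := cross m n hm0 hn0 hme hne
  set z := m - n with hz
  set p := x⁺ - m with hp
  set q := x⁻ - n with hq
  set p' := y⁺ - m with hp'
  set q' := y⁻ - n with hq'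
  have hp0 : 0 ≤ p := sub_nonneg.2 inf_le_left
  have hq0 : 0 ≤ q := sub_nonneg.2 inf_le_left
  have hp'0 : 0 ≤ p' := sub_nonneg.2 inf_le_right
  have hq'0 : 0 ≤ q' := sub_nonneg.2 inf_le_right
  have hpe : p ≤ e⁺ := (sub_le_self _ hm0).trans hx3
  have hqe : q ≤ e⁻ := (sub_le_self _ hn0).trans hx4
  have hp'e : p' ≤ e⁺ := (sub_le_self _ hm0).trans hy3
  have hq'e : q' ≤ e⁻ := (sub_le_self _ hn0).trans hy4
  have hpq : p ⊓ q = 0 := cross p q hp0 hq0 hpe hqe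
  have hp'q' : p' ⊓ q' = 0 := cross p' q' hp'0 hq'0 hp'e hq'e
  have hmp : m ⊓ p = 0 := myComp x⁺ y⁺ e⁺ (posPart_nonneg x) (posPart_nonneg y) hx3 hy3 hy1
  have hnq : n ⊓ q = 0 := myComp x⁻ y⁻ e⁻ (negPart_nonneg x) (negPart_nonneg y) hx4 hy4 hy2
  have hmp' : m ⊓ p' = 0 := by
    have h := myComp y⁺ x⁺ e⁺ (posPart_nonneg y) (posPart_nonneg x) hy3 hx3 hx1
    rwa [inf_comm y⁺ x⁺] at h
  have hnq' : n ⊓ q' = 0 := by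
    have h := myComp y⁻ x⁻ e⁻ (negPart_nonneg y) (negPart_nonneg x) hy4 hx4 hx2
    rwa [inf_comm y⁻ x⁻] at h
  have habz : |z| = m + n := myAbs m n hmn
  have hxb : x - z = p - q := by
    rw [hz, hp, hq]; conv_lhs => rw [← posPart_sub_negPart x]
    abel
  have hyc : y - z = p' - q' := by
    rw [hz, hp', hq']; conv_lhs => rw [← posPart_sub_negPart y]
    abel
  have habb : |x - z| = p + q := by rw [hxb]; exact myAbs p q hpq
  have habc : |y - z| = p' + q' := by rw [hyc]; exact myAbs p' q' hp'q'
  have dzb : RDisjoint z (x - z) := by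
    show |z| ⊓ |x - z| = 0
    rw [habz, habb]
    exact myFour m n p q hm0 hn0 hp0 hq0 hmp
      (cross m q hm0 hq0 hme hqe) (by rw [inf_comm]; exact cross p n hp0 hn0 hpe hne) hnq
  have dzc : RDisjoint z (y - z) := by
    show |z| ⊓ |y - z| = 0
    rw [habz, habc]
    exact myFour m n p' q' hm0 hn0 hp'0 hq'0 hmp'
      (cross m q' hm0 hq'0 hme hq'e) (by rw [inf_comm]; exact cross p' n hp'0 hn0 hp'e hne) hnq'
  have dbc : RDisjoint (x - z) (y - z) := by
    show |x - z| ⊓ |y - z| = 0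
    rw [habb, habc]
    refine myFour p q p' q' hp0 hq0 hp'0 hq'0 ?_ (cross p q' hp0 hq'0 hpe hq'e)
      (by rw [inf_comm]; exact cross p' q hp'0 hq0 hp'e hqe) ?_
    · rw [hp, hp', ← inf_sub, ← hm]; simp
    · rw [hq, hq', ← inf_sub, ← hn]; simp
  have hTx : T x = T z + T (x - z) := by
    have h := hT z (x - z) dzb
    rwa [show z + (x - z) = x by abel] at h
  have hTy : T y = T z + T (y - z) := by
    have h := hT z (y - z) dzc
    rwa [show z + (y - z) = y by abel] at h
  have dAB : |T z| ⊓ |T (x - z)| = 0 := hd _ _ dzb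
  have dAC : |T z| ⊓ |T (y - z)| = 0 := hd _ _ dzc
  have dBC : |T (x - z)| ⊓ |T (y - z)| = 0 := hd _ _ dbc
  rw [hTx, hTy, (myDisjSum _ _ dAB).1, (myDisjSum _ _ dAC).2]
  refine myFour _ _ _ _ (posPart_nonneg _) (posPart_nonneg _) (negPart_nonneg _)
    (negPart_nonneg _) (posPart_inf_negPart_eq_zero _) ?_ ?_ ?_
  · exact myZero _ _ (posPart_nonneg _) (negPart_nonneg _)
      (le_of_le_of_eq (inf_le_inf (posPart_le_abs' _) (negPart_le_abs' _)) dAC)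
  · refine myZero _ _ (posPart_nonneg _) (negPart_nonneg _) ?_
    rw [inf_comm]
    exact le_of_le_of_eq (inf_le_inf (negPart_le_abs' _) (posPart_le_abs' _)) dAB
  · exact myZero _ _ (posPart_nonneg _) (negPart_nonneg _)
      (le_of_le_of_eq (inf_le_inf (posPart_le_abs' _) (negPart_le_abs' _)) dBC)
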